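/- Let π be an infinite group with H¹(π; Zπ) = 0. Then the ring of Zπ-module endomorphisms of the augmentation ideal Iπ is isomorphic to Zπ, with x ∈ Zπ corresponding to the endomorphism b ↦ bx (right multiplication by x). -/

import Mathlib

/-- The augmentation ring homomorphism `ℤπ → ℤ`. -/
noncomputable def aug (π : Type) [Group π] : MonoidAlgebra ℤ π →+* ℤ :=
  ((MonoidAlgebra.lift ℤ ℤ π) 1).toRingHom

/-- The augmentation ideal `Iπ = ker(ε : ℤπ → ℤ)`. -/
noncomputable def Ipi (π : Type) [Group π] : Ideal (MonoidAlgebra ℤ π) :=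
  RingHom.ker (aug π)

/-- Right multiplication by `x ∈ ℤπ` as a `ℤπ`-linear endomorphism of `Iπ`. -/
noncomputable def rmulEnd (π : Type) [Group π] (x : MonoidAlgebra ℤ π) :
    ↥(Ipi π) →ₗ[MonoidAlgebra ℤ π] ↥(Ipi π) where
  toFun b := ⟨(b : MonoidAlgebra ℤ π) * x, by
    have hb : aug π (b : MonoidAlgebra ℤ π) = 0 := b.2
    show (b : MonoidAlgebra ℤ π) * x ∈ RingHom.ker (aug π)
    rw [RingHom.mem_ker, map_mul, hb, zero_mul]⟩
  map_add' := by intro b b'; ext; simp [add_mul]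
  map_smul' := by intro r b; ext; simp [smul_eq_mul, mul_assoc]

section Aux

variable (π : Type) [Group π]

lemma aug_single (g : π) (r : ℤ) : aug π (MonoidAlgebra.single g r) = r := by
  simp [aug, MonoidAlgebra.lift_single]

/-- `g - 1` lies in the augmentation ideal. -/
lemma sub_one_mem (g : π) :
    MonoidAlgebra.single g 1 - 1 ∈ Ipi π := by
  have : (1 : MonoidAlgebra ℤ π) = MonoidAlgebra.single (1 : π) 1 := rfl
  simp only [Ipi, RingHom.mem_ker, map_sub, this, aug_single, sub_self]

/-- The element `g - 1` of the augmentation ideal. -/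
noncomputable def eSub (g : π) : ↥(Ipi π) := ⟨MonoidAlgebra.single g 1 - 1, sub_one_mem π g⟩

/-- The representation action of the left regular representation is left
multiplication in the monoid algebra. -/
lemma ofMulAction_eq_mul (g : π) (v : MonoidAlgebra ℤ π) :
    (Representation.ofMulAction ℤ π π g v : MonoidAlgebra ℤ π) =
      MonoidAlgebra.single g 1 * v := by
  ext h
  rw [Representation.coeff_ofMulAction, MonoidAlgebra.coeff_single_mul_apply, one_mul]
  rfl

/-- Every element of the augmentation ideal is a `ℤ`-linear combination of the `g - 1`. -/
lemma mem_span (b : MonoidAlgebra ℤ π) (hb : b ∈ Ipi π) :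
    (⟨b, hb⟩ : ↥(Ipi π)) = ∑ g ∈ b.coeff.support, b.coeff g • eSub π g := by
  apply Subtype.ext
  push_cast [eSub]
  have h1 : ∑ g ∈ b.coeff.support, b.coeff g • (MonoidAlgebra.single g 1 - 1 : MonoidAlgebra ℤ π)
      = (∑ g ∈ b.coeff.support, b.coeff g • (MonoidAlgebra.single g 1 : MonoidAlgebra ℤ π))
        - (∑ g ∈ b.coeff.support, b.coeff g) • (1 : MonoidAlgebra ℤ π) := by
    rw [Finset.sum_smul, ← Finset.sum_sub_distrib]
    exact Finset.sum_congr rfl fun g _ => smul_sub _ _ _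
  have h2 : ∑ g ∈ b.coeff.support, b.coeff g • (MonoidAlgebra.single g 1 : MonoidAlgebra ℤ π) = b := by
    conv_rhs => rw [← MonoidAlgebra.sum_coeff_single b]
    rw [Finsupp.sum]
    exact Finset.sum_congr rfl fun g _ => by
      rw [MonoidAlgebra.smul_single, smul_eq_mul, mul_one]
  have h3 : ∑ g ∈ b.coeff.support, b.coeff g = 0 := by
    have := hb
    simp only [Ipi, RingHom.mem_ker] at this
    calc ∑ g ∈ b.coeff.support, b.coeff g = ∑ g ∈ b.coeff.support, aug π (MonoidAlgebra.single g (b.coeff g)) := by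
          exact Finset.sum_congr rfl fun g _ => (aug_single π g (b.coeff g)).symm
      _ = aug π b := by
          rw [← map_sum]
          congr 1
          conv_rhs => rw [← MonoidAlgebra.sum_coeff_single b]
          rfl
      _ = 0 := this
  rw [h1, h2, h3, zero_smul, sub_zero]

end Aux

/-- Let `π` be an infinite group with `H¹(π; ℤπ) = 0` (cohomology with coefficients
in the left regular representation).  Then the ring of `ℤπ`-module endomorphisms of
the augmentation ideal `Iπ` is isomorphic to `ℤπ`: the assignment
`x ↦ (b ↦ b·x)` is an additive bijection `ℤπ ≅ End_{ℤπ}(Iπ)` under which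
multiplication corresponds to composition (in the appropriate order). -/
theorem end_of_augmentation_ideal (π : Type) [Group π] [Infinite π]
    (hH1 : ∀ x y : groupCohomology (Rep.of (Representation.ofMulAction ℤ π π)) 1,
      x = y) :
    Function.Bijective (fun x : MonoidAlgebra ℤ π => rmulEnd π x)
    ∧ ∀ x y : MonoidAlgebra ℤ π, rmulEnd π (x * y) = (rmulEnd π y).comp (rmulEnd π x) := by
  set A := Rep.of (Representation.ofMulAction ℤ π π) with hA
  refine ⟨⟨?_, ?_⟩, ?_⟩
  · -- injectivity
    intro x y hxy
    by_contra hne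
    set z : MonoidAlgebra ℤ π := x - y with hz
    have hz0 : z ≠ 0 := sub_ne_zero.2 hne
    obtain ⟨a, ha⟩ := Finsupp.support_nonempty_iff.2 (mt MonoidAlgebra.coeff_eq_zero.1 hz0)
    have key : ∀ g : π, MonoidAlgebra.single g 1 * z = z := by
      intro g
      have := congrArg (fun f => ((f (eSub π g) : ↥(Ipi π)) : MonoidAlgebra ℤ π)) hxy
      simp only [rmulEnd, LinearMap.coe_mk, AddHom.coe_mk, eSub] at this
      have h' : (MonoidAlgebra.single g 1 - 1) * x = (MonoidAlgebra.single g 1 - 1) * y := this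
      have : (MonoidAlgebra.single g 1 - 1) * z = 0 := by
        rw [hz, mul_sub, h', sub_self]
      rw [sub_mul, one_mul, sub_eq_zero] at this
      exact this
    have hmem : ∀ g : π, g⁻¹ * a ∈ z.coeff.support := by
      intro g
      have h := congrArg (fun f : MonoidAlgebra ℤ π => f.coeff (g⁻¹ * a)) (key g⁻¹)
      simp only [MonoidAlgebra.coeff_single_mul_apply, one_mul, inv_inv,
        mul_inv_cancel_left] at h
      rw [Finsupp.mem_support_iff, ← h]
      exact Finsupp.mem_support_iff.1 ha
    have hinj : Function.Injective (fun g : π => g⁻¹ * a) := by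
      intro g h hgh
      simp only at hgh
      exact inv_injective (mul_right_cancel hgh)
    have : (z.coeff.support : Set π).Infinite :=
      Set.infinite_of_injective_forall_mem hinj (fun g => hmem g)
    exact this z.coeff.support.finite_toSet
  · -- surjectivity
    intro f
    -- the 1-cocycle g ↦ f (g - 1)
    set c : π → MonoidAlgebra ℤ π := fun g => ((f (eSub π g) : ↥(Ipi π)) : MonoidAlgebra ℤ π)
      with hc
    have hstep : ∀ g h : π, c (g * h) = MonoidAlgebra.single g 1 * c h + c g := by
      intro g h
      have hrel : eSub π (g * h)
          = (MonoidAlgebra.single g 1 : MonoidAlgebra ℤ π) • eSub π h + eSub π g := by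
        apply Subtype.ext
        push_cast [eSub]
        show (MonoidAlgebra.single (g * h) (1 : ℤ) - 1 : MonoidAlgebra ℤ π)
          = MonoidAlgebra.single g (1 : ℤ) * (MonoidAlgebra.single h (1 : ℤ) - 1)
            + (MonoidAlgebra.single g (1 : ℤ) - 1)
        rw [mul_sub, MonoidAlgebra.single_mul_single, one_mul, mul_one]
        abel
      show ((f (eSub π (g * h)) : ↥(Ipi π)) : MonoidAlgebra ℤ π) = _
      rw [hrel, map_add, map_smul]
      simp only [Submodule.coe_add, SetLike.val_smul, smul_eq_mul]
      rfl
    have hcocycle : c ∈ groupCohomology.cocycles₁ A := by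
      rw [groupCohomology.mem_cocycles₁_iff]
      intro g h
      rw [show A.ρ g (c h) = MonoidAlgebra.single g 1 * c h
          from ofMulAction_eq_mul π g (c h), hstep g h]
    -- H¹ = 0 : the cocycle is a coboundary
    have hcb : c ∈ groupCohomology.coboundaries₁ A := by
      have := (groupCohomology.H1π_eq_zero_iff
        (⟨c, hcocycle⟩ : groupCohomology.cocycles₁ A)).1 (hH1 _ _)
      exact this
    obtain ⟨x0, hx0⟩ := hcb
    set X : MonoidAlgebra ℤ π := x0 with hX
    have hx0' : ∀ g : π, c g = (MonoidAlgebra.single g 1 - 1) * X := by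
      intro g
      have h1 := congrFun hx0 g
      rw [groupCohomology.d₀₁_hom_apply] at h1
      rw [show A.ρ g X = MonoidAlgebra.single g 1 * X
          from ofMulAction_eq_mul π g x0] at h1
      rw [← h1, sub_mul, one_mul]
    refine ⟨X, ?_⟩
    apply LinearMap.ext
    rintro ⟨bval, hbmem⟩
    apply Subtype.ext
    show bval * X = ((f ⟨bval, hbmem⟩ : ↥(Ipi π)) : MonoidAlgebra ℤ π)
    have hspan := mem_span π bval hbmem
    have hspan' : bval = ∑ g ∈ bval.coeff.support,
        bval.coeff g • (MonoidAlgebra.single g 1 - 1 : MonoidAlgebra ℤ π) := by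
      have := congrArg (fun v : ↥(Ipi π) => (v : MonoidAlgebra ℤ π)) hspan
      simpa [eSub] using this
    calc bval * X
        = ∑ g ∈ bval.coeff.support,
            bval.coeff g • ((MonoidAlgebra.single g 1 - 1 : MonoidAlgebra ℤ π) * X) := by
          conv_lhs => rw [hspan']
          rw [Finset.sum_mul]
          exact Finset.sum_congr rfl fun g _ => (smul_mul_assoc _ _ _)
      _ = ∑ g ∈ bval.coeff.support,
            bval.coeff g • ((f (eSub π g) : ↥(Ipi π)) : MonoidAlgebra ℤ π) := by
          exact Finset.sum_congr rfl fun g _ => by rw [← hx0' g]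
      _ = ((f ⟨bval, hbmem⟩ : ↥(Ipi π)) : MonoidAlgebra ℤ π) := by
          rw [hspan, map_sum, AddSubmonoidClass.coe_finset_sum]
          refine Finset.sum_congr rfl fun g _ => ?_
          have harg : (bval.coeff g • eSub π g : ↥(Ipi π))
              = ((bval.coeff g : ℤ) : MonoidAlgebra ℤ π) • eSub π g := by
            apply Subtype.ext
            simp [zsmul_eq_mul]
          rw [harg, map_smul, SetLike.val_smul, smul_eq_mul, zsmul_eq_mul]
  · intro x y
    apply LinearMap.ext
    intro b
    apply Subtype.ext
    show (b : MonoidAlgebra ℤ π) * (x * y) = ((b : MonoidAlgebra ℤ π) * x) * y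
    rw [mul_assoc]
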